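/- Let q = a/b be a positive rational number in lowest terms. Then the expression ∑_{d : φ(d)/d = q} 1/d (sum over natural numbers d ≥ 1 with φ(d)/d = q) either vanishes, or is equal to ∏_{p ∈ 𝒫} 1/(p−1) for some finite set of primes 𝒫 whose largest element equals the largest prime factor of b (with 𝒫 empty when b = 1). -/
import Mathlib


open scoped BigOperators ENNReal

lemma prod_ratio_eq (S : Finset ℕ) (hS : ∀ p ∈ S, p.Prime) :
    ∏ p ∈ S, (1 - (p:ℚ)⁻¹) = ((∏ p ∈ S, (p-1) : ℕ) : ℚ) / ((∏ p ∈ S, p : ℕ) : ℚ) := by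
  rw [Nat.cast_prod, Nat.cast_prod, ← Finset.prod_div_distrib]
  refine Finset.prod_congr rfl fun p hp => ?_
  have h2 : 2 ≤ p := (hS p hp).two_le
  have hp0 : (p:ℚ) ≠ 0 := by positivity
  rw [Nat.cast_pred (by omega)]
  field_simp

lemma den_dvd_prod (S : Finset ℕ) (hS : ∀ p ∈ S, p.Prime) :
    (∏ p ∈ S, (1 - (p:ℚ)⁻¹)).den ∣ ∏ p ∈ S, p := by
  rw [prod_ratio_eq S hS]
  have h := Rat.den_dvd ((∏ p ∈ S, (p-1) : ℕ) : ℤ) ((∏ p ∈ S, p : ℕ) : ℤ)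
  rw [Rat.divInt_eq_div] at h
  simp only [Int.cast_natCast] at h
  exact_mod_cast h

lemma max_not_dvd_num (S : Finset ℕ) (hS : ∀ p ∈ S, p.Prime) {P : ℕ} (hPp : P.Prime)
    (hmax : ∀ x ∈ S, x ≤ P) : ¬ P ∣ ∏ p ∈ S, (p - 1) := by
  intro h
  obtain ⟨p, hp, hdvd⟩ := (hPp.prime.dvd_finset_prod_iff _).1 h
  have h2 : 2 ≤ p := (hS p hp).two_le
  have := Nat.le_of_dvd (by omega) hdvd
  have := hmax p hp
  omega

lemma max_dvd_den (S : Finset ℕ) (hS : ∀ p ∈ S, p.Prime) {P : ℕ} (hP : P ∈ S)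
    (hmax : ∀ x ∈ S, x ≤ P) : P ∣ (∏ p ∈ S, (1 - (p:ℚ)⁻¹)).den := by
  set r := ∏ p ∈ S, (1 - (p:ℚ)⁻¹) with hr
  set a := ∏ p ∈ S, (p - 1) with ha
  set b := ∏ p ∈ S, p with hb
  have hPp : P.Prime := hS P hP
  have hb0 : b ≠ 0 := Finset.prod_ne_zero_iff.2 fun p hp => (hS p hp).pos.ne'
  obtain ⟨c, hc⟩ := den_dvd_prod S hS
  rw [← hr, ← ha, ← hb] at *
  -- a = r.num.natAbs * c
  have hbQ : (b:ℚ) ≠ 0 := Nat.cast_ne_zero.2 hb0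
  have hrab : r = (a:ℚ) / (b:ℚ) := prod_ratio_eq S hS
  have hden0 : (r.den : ℚ) ≠ 0 := Nat.cast_ne_zero.2 r.den_nz
  have hnum : (a:ℚ) = (r.num : ℚ) * (c : ℚ) := by
    have h1 : (a:ℚ) = r * b := by rw [hrab]; field_simp
    have h2 : (r.num : ℚ) = r * (r.den : ℚ) := by
      have h3 := Rat.num_div_den r
      rwa [div_eq_iff hden0] at h3
    rw [h1, hc]
    push_cast
    rw [h2]
    ring
  have hnumZ : (a:ℤ) = r.num * (c:ℤ) := by exact_mod_cast hnum
  have hPa : ¬ P ∣ a := max_not_dvd_num S hS hPp hmax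
  have hPc : ¬ P ∣ c := by
    intro hPc
    exact hPa (by
      have : (P:ℤ) ∣ (a:ℤ) := hnumZ ▸ Dvd.dvd.mul_left (Int.natCast_dvd_natCast.2 hPc) _
      exact_mod_cast this)
  have hPb : P ∣ b := Finset.dvd_prod_of_mem _ hP
  rw [hc] at hPb
  rcases (Nat.Prime.dvd_mul hPp).1 hPb with h | h
  · exact h
  · exact absurd h hPc

lemma eq_empty_of_prod_eq_one (T : Finset ℕ) (hT : ∀ p ∈ T, p.Prime)
    (h : ∏ p ∈ T, (1 - (p:ℚ)⁻¹) = 1) : T = ∅ := by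
  by_contra hne
  obtain ⟨hne'⟩ := Finset.nonempty_iff_ne_empty.2 hne |>.exists_mem
  have hTne : T.Nonempty := Finset.nonempty_iff_ne_empty.2 hne
  set Q := T.max' hTne with hQ
  have hQmem : Q ∈ T := T.max'_mem hTne
  have hdvd := max_dvd_den T hT hQmem (fun x hx => T.le_max' x hx)
  rw [h] at hdvd
  simp only [Rat.den_ofNat] at hdvd
  have := Nat.le_of_dvd one_pos hdvd
  have := (hT Q hQmem).two_le
  omega

lemma prod_ratio_inj : ∀ n (S T : Finset ℕ), S.card ≤ n → (∀ p ∈ S, p.Prime) →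
    (∀ p ∈ T, p.Prime) →
    ∏ p ∈ S, (1 - (p:ℚ)⁻¹) = ∏ p ∈ T, (1 - (p:ℚ)⁻¹) → S = T := by
  intro n
  induction n with
  | zero =>
    intro S T hcard hS hT h
    have hSe : S = ∅ := Finset.card_eq_zero.1 (Nat.le_zero.1 hcard)
    subst hSe
    simp only [Finset.prod_empty] at h
    exact (eq_empty_of_prod_eq_one T hT h.symm).symm
  | succ n ih =>
    intro S T hcard hS hT h
    rcases Finset.eq_empty_or_nonempty S with hSe | hSne
    · subst hSe
      simp only [Finset.prod_empty] at h
      exact (eq_empty_of_prod_eq_one T hT h.symm).symm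
    rcases Finset.eq_empty_or_nonempty T with hTe | hTne
    · subst hTe
      simp only [Finset.prod_empty] at h
      exact eq_empty_of_prod_eq_one S hS h
    have hPmem := S.max'_mem hSne
    have hQmem := T.max'_mem hTne
    have hPp : (S.max' hSne).Prime := hS _ hPmem
    have hQp : (T.max' hTne).Prime := hT _ hQmem
    -- P = Q
    have key : ∀ (A B : Finset ℕ) (hA : ∀ p ∈ A, p.Prime) (hB : ∀ p ∈ B, p.Prime)
        (hAne : A.Nonempty) (hBne : B.Nonempty),
        ∏ p ∈ A, (1 - (p:ℚ)⁻¹) = ∏ p ∈ B, (1 - (p:ℚ)⁻¹) →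
        A.max' hAne ≤ B.max' hBne := by
      intro A B hA hB hAne hBne hAB
      have hdvd := max_dvd_den A hA (A.max'_mem hAne) (fun x hx => A.le_max' x hx)
      rw [hAB] at hdvd
      have hdvd2 : A.max' hAne ∣ ∏ p ∈ B, p := hdvd.trans (den_dvd_prod B hB)
      obtain ⟨q, hq, hdq⟩ := ((hA _ (A.max'_mem hAne)).prime.dvd_finset_prod_iff _).1 hdvd2
      have : A.max' hAne = q :=
        (Nat.prime_dvd_prime_iff_eq (hA _ (A.max'_mem hAne)) (hB q hq)).1 hdq
      exact this ▸ B.le_max' q hq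
    have hPQ : S.max' hSne = T.max' hTne :=
      le_antisymm (key S T hS hT hSne hTne h) (key T S hT hS hTne hSne h.symm)
    -- peel off P
    have hfac : (1 - ((S.max' hSne : ℕ):ℚ)⁻¹) ≠ 0 := by
      have h2 : 2 ≤ S.max' hSne := hPp.two_le
      have : ((S.max' hSne : ℕ):ℚ)⁻¹ < 1 := by
        rw [inv_lt_one_iff₀]
        right; exact_mod_cast by omega
      intro hcontra
      rw [sub_eq_zero] at hcontra
      exact absurd hcontra.symm (ne_of_lt this)
    have hprodS := Finset.mul_prod_erase S (fun p => (1 - (p:ℚ)⁻¹)) hPmem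
    have hprodT := Finset.mul_prod_erase T (fun p => (1 - (p:ℚ)⁻¹)) hQmem
    rw [← hprodS, ← hprodT, ← hPQ] at h
    have herase : ∏ p ∈ S.erase (S.max' hSne), (1 - (p:ℚ)⁻¹)
        = ∏ p ∈ T.erase (S.max' hSne), (1 - (p:ℚ)⁻¹) :=
      mul_left_cancel₀ hfac h
    have hcard' : (S.erase (S.max' hSne)).card ≤ n := by
      have := Finset.card_erase_of_mem hPmem
      omega
    have heq := ih (S.erase (S.max' hSne)) (T.erase (S.max' hSne)) hcard'
      (fun p hp => hS p (Finset.mem_of_mem_erase hp))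
      (fun p hp => hT p (Finset.mem_of_mem_erase hp)) herase
    have hback : insert (S.max' hSne) (S.erase (S.max' hSne))
        = insert (S.max' hSne) (T.erase (S.max' hSne)) := by rw [heq]
    rw [Finset.insert_erase hPmem] at hback
    rw [hPQ, Finset.insert_erase hQmem] at hback
    exact hback

lemma den_primeFactors_max (S : Finset ℕ) (hS : ∀ p ∈ S, p.Prime) :
    (∏ p ∈ S, (1 - (p:ℚ)⁻¹)).den.primeFactors.max = S.max := by
  rcases Finset.eq_empty_or_nonempty S with hSe | hSne
  · subst hSe; simp
  have hPmem := S.max'_mem hSne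
  have hPp : (S.max' hSne).Prime := hS _ hPmem
  have hdvd := max_dvd_den S hS hPmem (fun x hx => S.le_max' x hx)
  have hden0 : (∏ p ∈ S, (1 - (p:ℚ)⁻¹)).den ≠ 0 := (∏ p ∈ S, (1 - (p:ℚ)⁻¹)).den_nz
  have hmem : S.max' hSne ∈ (∏ p ∈ S, (1 - (p:ℚ)⁻¹)).den.primeFactors :=
    Nat.mem_primeFactors.2 ⟨hPp, hdvd, hden0⟩
  have hne : (∏ p ∈ S, (1 - (p:ℚ)⁻¹)).den.primeFactors.Nonempty := ⟨_, hmem⟩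
  rw [← Finset.coe_max' hne, ← Finset.coe_max' hSne]
  congr 1
  refine le_antisymm ?_ (Finset.le_max' _ _ hmem)
  have hMmem := Finset.max'_mem _ hne
  obtain ⟨hMp, hMdvd, -⟩ := Nat.mem_primeFactors.1 hMmem
  have : _ ∣ ∏ p ∈ S, p := hMdvd.trans (den_dvd_prod S hS)
  obtain ⟨q, hq, hdq⟩ := (hMp.prime.dvd_finset_prod_iff _).1 this
  have := (Nat.prime_dvd_prime_iff_eq hMp (hS q hq)).1 hdq
  exact this ▸ S.le_max' q hq

lemma geom_factor (p : ℕ) (hp : p.Prime) :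
    (p:ℝ≥0∞)⁻¹ * (1 - (p:ℝ≥0∞)⁻¹)⁻¹ = 1 / ((p:ℝ≥0∞) - 1) := by
  have hp0 : (p:ℝ≥0∞) ≠ 0 := Nat.cast_ne_zero.2 hp.pos.ne'
  have hpt : (p:ℝ≥0∞) ≠ ⊤ := ENNReal.natCast_ne_top p
  have h1 : (1:ℝ≥0∞) ≤ p := by exact_mod_cast hp.one_lt.le
  have key : 1 - (p:ℝ≥0∞)⁻¹ = ((p:ℝ≥0∞) - 1) / p := by
    refine ENNReal.sub_eq_of_eq_add (ENNReal.inv_ne_top.2 hp0) ?_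
    rw [← one_div, ENNReal.div_add_div_same, tsub_add_cancel_of_le h1,
      ENNReal.div_self hp0 hpt]
  rw [key, ENNReal.inv_div (Or.inl hpt) (Or.inl hp0), div_eq_mul_inv,
    ← mul_assoc, ENNReal.inv_mul_cancel hp0 hpt, one_mul, one_div]

lemma tsum_primeFactors_eq (S : Finset ℕ) : (∀ p ∈ S, p.Prime) →
    ∑' d : {d : ℕ // d ≠ 0 ∧ d.primeFactors = S}, (1:ℝ≥0∞) / (d.1 : ℝ≥0∞)
      = ∏ p ∈ S, (1:ℝ≥0∞) / ((p:ℝ≥0∞) - 1) := by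
  induction S using Finset.induction_on with
  | empty =>
    intro _
    rw [tsum_eq_single (⟨1, by simp⟩ : {d : ℕ // d ≠ 0 ∧ d.primeFactors = (∅ : Finset ℕ)}) ?_]
    · simp
    · intro b hb
      exfalso
      apply hb
      have h2 := b.2
      have hb1 : b.1 = 1 := by
        rcases (Nat.primeFactors_eq_empty).1 h2.2 with h | h
        · exact absurd h h2.1
        · exact h
      exact Subtype.ext hb1
  | @insert p s hps ih =>
    intro hS
    have hp : p.Prime := hS p (Finset.mem_insert_self p s)
    have hs' : ∀ q ∈ s, Nat.Prime q := fun q hq => hS q (Finset.mem_insert_of_mem hq)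
    have hpne : ∀ (m : {d : ℕ // d ≠ 0 ∧ d.primeFactors = s}), ¬ p ∣ m.1 := by
      intro m hdvd
      exact hps (m.2.2 ▸ Nat.mem_primeFactors.2 ⟨hp, hdvd, m.2.1⟩)
    let e : ℕ × {d : ℕ // d ≠ 0 ∧ d.primeFactors = s}
        ≃ {d : ℕ // d ≠ 0 ∧ d.primeFactors = insert p s} :=
      { toFun := fun x => ⟨p ^ (x.1 + 1) * x.2.1, by
          refine ⟨mul_ne_zero (pow_ne_zero _ hp.pos.ne') x.2.2.1, ?_⟩
          rw [Nat.primeFactors_mul (pow_ne_zero _ hp.pos.ne') x.2.2.1,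
            Nat.primeFactors_prime_pow (Nat.succ_ne_zero _) hp, x.2.2.2,
            ← Finset.insert_eq]⟩
        invFun := fun d => (d.1.factorization p - 1, ⟨ordCompl[p] d.1, by
          refine ⟨(Nat.ordCompl_pos p d.2.1).ne', ?_⟩
          rw [← Nat.support_factorization, Nat.factorization_ordCompl,
            Finsupp.support_erase, Nat.support_factorization, d.2.2,
            Finset.erase_insert hps]⟩)
        left_inv := by
          rintro ⟨k, m⟩
          have hm0 := m.2.1
          have hfac : (p ^ (k + 1) * m.1).factorization p = k + 1 := by
            rw [Nat.factorization_mul (pow_ne_zero _ hp.pos.ne') hm0,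
              Nat.Prime.factorization_pow hp]
            simp [Nat.factorization_eq_zero_of_not_dvd (hpne m)]
          refine Prod.ext ?_ ?_
          · simp [hfac]
          · apply Subtype.ext
            simp only [hfac]
            exact Nat.mul_div_cancel_left _ (pow_pos hp.pos _)
        right_inv := by
          rintro ⟨d, hd0, hdpf⟩
          have hpd : p ∈ d.primeFactors := hdpf ▸ Finset.mem_insert_self p s
          have hv : d.factorization p ≠ 0 := by
            rw [← Nat.support_factorization] at hpd
            exact Finsupp.mem_support_iff.1 hpd
          apply Subtype.ext
          simp only
          rw [Nat.sub_add_cancel (Nat.one_le_iff_ne_zero.2 hv)]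
          exact Nat.ordProj_mul_ordCompl_eq_self d p }
    rw [← Equiv.tsum_eq e, ENNReal.tsum_prod']
    have hsummand : ∀ (k : ℕ) (m : {d : ℕ // d ≠ 0 ∧ d.primeFactors = s}),
        (1:ℝ≥0∞) / ((e (k, m)).1 : ℝ≥0∞)
          = ((p:ℝ≥0∞)⁻¹)^(k+1) * ((1:ℝ≥0∞) / (m.1 : ℝ≥0∞)) := by
      intro k m
      show (1:ℝ≥0∞) / ((p ^ (k+1) * m.1 : ℕ) : ℝ≥0∞) = _
      push_cast
      rw [one_div, one_div, ENNReal.mul_inv (Or.inl (pow_ne_zero _ (Nat.cast_ne_zero.2 hp.pos.ne')))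
        (Or.inl (ENNReal.pow_ne_top (ENNReal.natCast_ne_top p))), ENNReal.inv_pow]
    calc ∑' (k : ℕ) (m : {d : ℕ // d ≠ 0 ∧ d.primeFactors = s}), (1:ℝ≥0∞) / ((e (k, m)).1 : ℝ≥0∞)
        = ∑' (k : ℕ) (m : {d : ℕ // d ≠ 0 ∧ d.primeFactors = s}),
            ((p:ℝ≥0∞)⁻¹)^(k+1) * ((1:ℝ≥0∞) / (m.1 : ℝ≥0∞)) := by
          exact tsum_congr fun k => tsum_congr fun m => hsummand k m
      _ = (∑' (k : ℕ), ((p:ℝ≥0∞)⁻¹)^(k+1)) *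
            ∑' (m : {d : ℕ // d ≠ 0 ∧ d.primeFactors = s}), (1:ℝ≥0∞) / (m.1 : ℝ≥0∞) := by
          simp_rw [ENNReal.tsum_mul_left]
          rw [ENNReal.tsum_mul_right]
      _ = ∏ q ∈ insert p s, (1:ℝ≥0∞) / ((q:ℝ≥0∞) - 1) := by
          rw [ENNReal.tsum_geometric_add_one, geom_factor p hp, ih hs',
            Finset.prod_insert hps]

lemma totient_ratio (d : ℕ) (hd : d ≠ 0) :
    (Nat.totient d : ℚ) / d = ∏ p ∈ d.primeFactors, (1 - (p:ℚ)⁻¹) := by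
  rw [Nat.totient_eq_mul_prod_factors, mul_comm, mul_div_assoc,
    div_self (by exact_mod_cast hd : (d:ℚ) ≠ 0), mul_one]

theorem stmt3 (q : ℚ) (hq : 0 < q) :
    (∑' d : {d : ℕ // 0 < d ∧ (Nat.totient d : ℚ) / d = q}, (1 : ℝ≥0∞) / (d.1 : ℝ≥0∞)) = 0 ∨
    ∃ P : Finset ℕ, (∀ p ∈ P, p.Prime) ∧ P.max = q.den.primeFactors.max ∧
      (∑' d : {d : ℕ // 0 < d ∧ (Nat.totient d : ℚ) / d = q}, (1 : ℝ≥0∞) / (d.1 : ℝ≥0∞)) =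
        ∏ p ∈ P, (1 : ℝ≥0∞) / ((p : ℝ≥0∞) - 1) := by
  by_cases hne : Nonempty {d : ℕ // 0 < d ∧ (Nat.totient d : ℚ) / d = q}
  swap
  · left
    have := not_nonempty_iff.mp hne
    exact tsum_empty
  obtain ⟨⟨d₀, hd₀pos, hd₀q⟩⟩ := hne
  right
  set S := d₀.primeFactors with hSdef
  have hS : ∀ p ∈ S, p.Prime := fun p hp => Nat.prime_of_mem_primeFactors hp
  have hqS : q = ∏ p ∈ S, (1 - (p:ℚ)⁻¹) := by
    rw [← hd₀q, totient_ratio d₀ hd₀pos.ne']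
  refine ⟨S, hS, ?_, ?_⟩
  · rw [hqS, den_primeFactors_max S hS]
  · have hset : {d : ℕ | 0 < d ∧ (Nat.totient d : ℚ) / d = q}
        = {d : ℕ | d ≠ 0 ∧ d.primeFactors = S} := by
      ext d
      simp only [Set.mem_setOf_eq]
      constructor
      · rintro ⟨hd0, hdq⟩
        refine ⟨hd0.ne', ?_⟩
        apply prod_ratio_inj (d.primeFactors.card) d.primeFactors S le_rfl
          (fun p hp => Nat.prime_of_mem_primeFactors hp) hS
        rw [← totient_ratio d hd0.ne', hdq, hqS]
      · rintro ⟨hd0, hdpf⟩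
        refine ⟨Nat.pos_of_ne_zero hd0, ?_⟩
        rw [totient_ratio d hd0, hdpf, ← hqS]
    calc (∑' d : {d : ℕ // 0 < d ∧ (Nat.totient d : ℚ) / d = q}, (1 : ℝ≥0∞) / (d.1 : ℝ≥0∞))
        = ∑' d : ℕ, Set.indicator {d : ℕ | 0 < d ∧ (Nat.totient d : ℚ) / d = q}
            (fun d => (1 : ℝ≥0∞) / (d : ℝ≥0∞)) d := by
          exact tsum_subtype {d : ℕ | 0 < d ∧ (Nat.totient d : ℚ) / d = q}
            (fun d => (1 : ℝ≥0∞) / (d : ℝ≥0∞))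
      _ = ∑' d : ℕ, Set.indicator {d : ℕ | d ≠ 0 ∧ d.primeFactors = S}
            (fun d => (1 : ℝ≥0∞) / (d : ℝ≥0∞)) d := by rw [hset]
      _ = ∑' d : {d : ℕ // d ≠ 0 ∧ d.primeFactors = S}, (1 : ℝ≥0∞) / (d.1 : ℝ≥0∞) := by
          exact (tsum_subtype {d : ℕ | d ≠ 0 ∧ d.primeFactors = S}
            (fun d => (1 : ℝ≥0∞) / (d : ℝ≥0∞))).symm
      _ = ∏ p ∈ S, (1 : ℝ≥0∞) / ((p : ℝ≥0∞) - 1) := tsum_primeFactors_eq S hS
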